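/- Let A be a finite abelian group with a nondegenerate symmetric ℚ/ℤ-valued pairing, and let H ⊆ A be a subgroup whose order is coprime to the order of H^⊥/H-part in the following sense: suppose |A| = |H|²·D with D coprime to |H|, and H is isotropic. Then A decomposes as A = H ⊕ H' ⊕ A' where A' is the D-torsion subgroup of A and H' is any isotropic complement of H inside the prime-to-D part; moreover H^⊥ = H ⊕ A'. -/
import Mathlib


/-- The homomorphism `ℚ/ℤ → ℚ/2ℤ` induced by multiplication by `2`. -/
noncomputable def doubleHom : AddCircle (1 : ℚ) →+ AddCircle (2 : ℚ) :=
  QuotientAddGroup.lift _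
    ((QuotientAddGroup.mk' (AddSubgroup.zmultiples (2 : ℚ))).comp
      (zsmulAddGroupHom 2)) (by
    intro x hx
    obtain ⟨n, rfl⟩ := hx
    simp only [AddMonoidHom.mem_ker, AddMonoidHom.comp_apply, QuotientAddGroup.mk'_apply,
      QuotientAddGroup.eq_zero_iff]
    exact ⟨n, by simp [zsmulAddGroupHom]; ring⟩)

/-- The orthogonal complement of a subgroup `H` w.r.t. a `ℚ/ℤ`-valued pairing `b`. -/
def orthCompl {A : Type*} [AddCommGroup A]
    (b : A →+ A →+ AddCircle (1 : ℚ)) (H : AddSubgroup A) : AddSubgroup A where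
  carrier := {a | ∀ h ∈ H, b a h = 0}
  zero_mem' := by intro h hh; simp
  add_mem' := by intro x y hx hy h hh; simp [hx h hh, hy h hh]
  neg_mem' := by intro x hx h hh; simp [hx h hh]

/-- The subgroup of elements of order dividing `D`. -/
def torsionSub (A : Type*) [AddCommGroup A] (D : ℕ) : AddSubgroup A :=
  (zsmulAddGroupHom (D : ℤ)).ker

lemma doubleHom_eq_zero {x : AddCircle (1 : ℚ)} (h : doubleHom x = 0) : x = 0 := by
  obtain ⟨r, rfl⟩ := QuotientAddGroup.mk_surjective x
  have h2 : ((zsmulAddGroupHom 2 r : ℚ)) ∈ AddSubgroup.zmultiples (2 : ℚ) := by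
    rwa [doubleHom, QuotientAddGroup.lift_mk', AddMonoidHom.comp_apply,
      QuotientAddGroup.mk'_apply, QuotientAddGroup.eq_zero_iff] at h
  obtain ⟨n, hn⟩ := h2
  refine (QuotientAddGroup.eq_zero_iff r).mpr ⟨n, ?_⟩
  simp only [zsmulAddGroupHom_apply] at hn
  rw [zsmul_eq_mul, zsmul_eq_mul] at hn
  show (n : ℤ) • (1 : ℚ) = r
  rw [zsmul_eq_mul]
  push_cast at hn ⊢
  linarith

lemma smul_coprime_eq_zero {A : Type*} [AddCommGroup A] {m n : ℕ} (h : Nat.Coprime m n)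
    {x : A} (hm : (m : ℤ) • x = 0) (hn : (n : ℤ) • x = 0) : x = 0 := by
  obtain ⟨u, v, huv⟩ := Int.isCoprime_iff_gcd_eq_one.mpr (by rwa [Int.gcd_natCast_natCast])
  calc x = (u * (m : ℤ) + v * n) • x := by rw [huv, one_zsmul]
    _ = u • ((m : ℤ) • x) + v • ((n : ℤ) • x) := by rw [add_zsmul, mul_zsmul, mul_zsmul]
    _ = 0 := by rw [hm, hn, smul_zero, smul_zero, add_zero]

lemma smul_pairing {A : Type*} [AddCommGroup A] (b : A →+ A →+ AddCircle (1 : ℚ))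
    (m : ℤ) (x y : A) : m • (b x y) = b (m • x) y :=
  (map_zsmul (b.flip y) m x).symm

lemma pairing_add_left {A : Type*} [AddCommGroup A] (b : A →+ A →+ AddCircle (1 : ℚ))
    (x y z : A) : b (x + y) z = b x z + b y z :=
  congrFun (congrArg _ (map_add b x y)) z

lemma orth_coprime {A : Type*} [AddCommGroup A] (b : A →+ A →+ AddCircle (1 : ℚ))
    {m n : ℕ} (h : Nat.Coprime m n) {x y : A} (hx : (m : ℤ) • x = 0)
    (hy : (n : ℤ) • y = 0) : b x y = 0 := by
  refine smul_coprime_eq_zero h ?_ ?_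
  · rw [smul_pairing, hx, map_zero, AddMonoidHom.zero_apply]
  · rw [show (n : ℤ) • (b x y) = b x ((n : ℤ) • y) from (map_zsmul (b x) n y).symm, hy,
      map_zero]

lemma cyclic_kill {A : Type*} [AddCommGroup A] {d : ℕ} {H : AddSubgroup A}
    (hc : Nonempty (H ≃+ ZMod d)) {x : A} (hx : x ∈ H) : (d : ℤ) • x = 0 := by
  obtain ⟨e⟩ := hc
  have : (d : ℤ) • (⟨x, hx⟩ : H) = 0 := by
    apply e.injective
    rw [map_zsmul, map_zero]
    rw [zsmul_eq_mul]
    push_cast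
    simp [ZMod.natCast_self]
  exact congrArg Subtype.val this

lemma mem_torsionSub {A : Type*} [AddCommGroup A] {D : ℕ} {x : A} :
    x ∈ torsionSub A D ↔ (D : ℤ) • x = 0 := by
  simp [torsionSub, AddMonoidHom.mem_ker, zsmulAddGroupHom_apply]

/-- Let `A` be a finite abelian group with a nondegenerate symmetric
`ℚ/ℤ`-valued pairing `b` with quadratic refinement `q`, `|A| = d²·D` with `d` coprime
to `D`, `H ⊆ A` isotropic cyclic of order `d`, and `H'` an isotropic cyclic subgroup of
order `d` with `H ∩ H' = 0`. Then `A = H ⊕ H' ⊕ A'` where `A'` is the `D`-torsion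
subgroup of `A`, and moreover `H^⊥ = H ⊕ A'`. -/
theorem stmt11 {A : Type*} [AddCommGroup A] [Fintype A]
    (b : A →+ A →+ AddCircle (1 : ℚ))
    (hbsymm : ∀ x y : A, b x y = b y x)
    (hbnd : ∀ x : A, (∀ y : A, b x y = 0) → x = 0)
    (q : A → AddCircle (2 : ℚ))
    (hqb : ∀ x y : A, q (x + y) = q x + q y + doubleHom (b x y))
    (d D : ℕ) (hd : 0 < d) (hD : 0 < D)
    (hcard : Nat.card A = d ^ 2 * D) (hcop : Nat.Coprime d D)
    (H H' : AddSubgroup A)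
    (hHcyc : Nonempty (H ≃+ ZMod d)) (hH'cyc : Nonempty (H' ≃+ ZMod d))
    (hHiso : ∀ x ∈ H, q x = 0) (hH'iso : ∀ x ∈ H', q x = 0)
    (hmeet : H ⊓ H' = ⊥) :
    H ⊔ H' ⊔ torsionSub A D = ⊤ ∧
    (H ⊔ H') ⊓ torsionSub A D = ⊥ ∧
    orthCompl b H = H ⊔ torsionSub A D := by
  have hcop2 : Nat.Coprime (d ^ 2) D := hcop.pow_left 2
  have hHk : ∀ x ∈ H, (d : ℤ) • x = 0 := fun x hx => cyclic_kill hHcyc hx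
  have hH'k : ∀ x ∈ H', (d : ℤ) • x = 0 := fun x hx => cyclic_kill hH'cyc hx
  set T := torsionSub A (d ^ 2) with hTdef
  have hTmem : ∀ x : A, x ∈ T ↔ ((d ^ 2 : ℕ) : ℤ) • x = 0 := fun x => mem_torsionSub
  -- H and H' lie in T
  have hdd : ∀ x : A, (d : ℤ) • x = 0 → ((d ^ 2 : ℕ) : ℤ) • x = 0 := by
    intro x hx
    have : ((d ^ 2 : ℕ) : ℤ) = (d : ℤ) * d := by push_cast; ring
    rw [this, mul_zsmul, hx, smul_zero]
  have hHT : H ≤ T := fun x hx => (hTmem x).mpr (hdd x (hHk x hx))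
  have hH'T : H' ≤ T := fun x hx => (hTmem x).mpr (hdd x (hH'k x hx))
  -- cardinalities
  have hcH : Nat.card H = d := by
    obtain ⟨e⟩ := hHcyc; rw [Nat.card_congr e.toEquiv, Nat.card_zmod]
  have hcH' : Nat.card H' = d := by
    obtain ⟨e⟩ := hH'cyc; rw [Nat.card_congr e.toEquiv, Nat.card_zmod]
  have hinj : Function.Injective
      (fun p : H × H' => (⟨(p.1 : A) + (p.2 : A),
        AddSubgroup.add_mem_sup p.1.2 p.2.2⟩ : (H ⊔ H' : AddSubgroup A))) := by
    rintro ⟨⟨x, hx⟩, ⟨y, hy⟩⟩ ⟨⟨x', hx'⟩, ⟨y', hy'⟩⟩ hEq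
    simp only [Subtype.mk.injEq] at hEq
    have hmem : x - x' ∈ H ⊓ H' := by
      rw [AddSubgroup.mem_inf]
      refine ⟨sub_mem hx hx', ?_⟩
      have : x - x' = y' - y := by linear_combination (norm := abel) hEq
      rw [this]
      exact sub_mem hy' hy
    rw [hmeet, AddSubgroup.mem_bot, sub_eq_zero] at hmem
    subst hmem
    have : y = y' := by
      have := add_left_cancel hEq
      exact this
    subst this
    rfl
  have hle : d ^ 2 ≤ Nat.card (H ⊔ H' : AddSubgroup A) := by
    have h1 := Nat.card_le_card_of_injective _ hinj
    rwa [Nat.card_prod, hcH, hcH', ← pow_two] at h1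
  have hdvd : Nat.card T ∣ d ^ 2 * D := hcard ▸ AddSubgroup.card_addSubgroup_dvd_card T
  have hcopT : Nat.Coprime (Nat.card T) D := by
    by_contra hne
    have hg1 : Nat.gcd (Nat.card T) D ≠ 1 := hne
    have pp := Nat.minFac_prime hg1
    set p := (Nat.gcd (Nat.card T) D).minFac with hp
    have hpT : p ∣ Nat.card T := (Nat.minFac_dvd _).trans (Nat.gcd_dvd_left _ _)
    have hpD : p ∣ D := (Nat.minFac_dvd _).trans (Nat.gcd_dvd_right _ _)
    haveI : Fintype T := Fintype.ofFinite T
    haveI : Fact p.Prime := ⟨pp⟩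
    have hpc : p ∣ Fintype.card ↥T := by rwa [Nat.card_eq_fintype_card] at hpT
    obtain ⟨x, hx⟩ := exists_prime_addOrderOf_dvd_card p hpc
    have hxkill : (d ^ 2) • x = 0 := by
      apply Subtype.ext
      have h2 := (hTmem x.1).mp x.2
      rw [natCast_zsmul] at h2
      simpa using h2
    have hpd : p ∣ d ^ 2 := hx ▸ addOrderOf_dvd_of_nsmul_eq_zero hxkill
    have hdg : p ∣ Nat.gcd (d ^ 2) D := Nat.dvd_gcd hpd hpD
    rw [hcop2.gcd_eq_one] at hdg
    exact pp.ne_one (Nat.dvd_one.mp hdg)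
  have hcT : Nat.card T ≤ d ^ 2 :=
    Nat.le_of_dvd (pow_pos hd 2) (hcopT.dvd_of_dvd_mul_right hdvd)
  have hsupT : H ⊔ H' = T :=
    AddSubgroup.eq_of_le_of_card_ge (sup_le hHT hH'T) (hcT.trans hle)
  -- Bezout: T ⊔ torsionSub A D = ⊤
  have hkillA : ∀ a : A, ((d ^ 2 * D : ℕ) : ℤ) • a = 0 := by
    intro a
    rw [natCast_zsmul, ← hcard]
    exact card_nsmul_eq_zero'
  have hsup2 : T ⊔ torsionSub A D = ⊤ := by
    rw [eq_top_iff]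
    intro a _
    obtain ⟨u, v, huv⟩ := Int.isCoprime_iff_gcd_eq_one.mpr
      (by rw [Int.gcd_natCast_natCast]; exact hcop2)
    have hx1 : (v * (D : ℤ)) • a ∈ T := by
      rw [hTmem]
      rw [← mul_zsmul]
      have : ((d ^ 2 : ℕ) : ℤ) * (v * D) = v * ((d ^ 2 * D : ℕ) : ℤ) := by push_cast; ring
      rw [this, mul_zsmul, hkillA, smul_zero]
    have hx2 : (u * ((d ^ 2 : ℕ) : ℤ)) • a ∈ torsionSub A D := by
      rw [mem_torsionSub, ← mul_zsmul]
      have : (D : ℤ) * (u * (d ^ 2 : ℕ)) = u * ((d ^ 2 * D : ℕ) : ℤ) := by push_cast; ring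
      rw [this, mul_zsmul, hkillA, smul_zero]
    have : a = (v * (D : ℤ)) • a + (u * ((d ^ 2 : ℕ) : ℤ)) • a := by
      rw [← add_zsmul]
      have : v * (D : ℤ) + u * ((d ^ 2 : ℕ) : ℤ) = 1 := by
        rw [← huv]; push_cast; ring
      rw [this, one_zsmul]
    rw [this]
    exact AddSubgroup.add_mem_sup hx1 hx2
  -- claim 1
  have claim1 : H ⊔ H' ⊔ torsionSub A D = ⊤ := by rw [hsupT]; exact hsup2
  -- claim 2
  have claim2 : (H ⊔ H') ⊓ torsionSub A D = ⊥ := by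
    rw [hsupT, eq_bot_iff]
    rintro x ⟨hx1, hx2⟩
    rw [AddSubgroup.mem_bot]
    exact smul_coprime_eq_zero hcop2 ((hTmem x).mp hx1) (mem_torsionSub.mp hx2)
  -- pairing vanishes on H and on H'
  have hbH : ∀ x ∈ H, ∀ y ∈ H, b x y = 0 := by
    intro x hx y hy
    apply doubleHom_eq_zero
    have h1 := hqb x y
    rw [hHiso x hx, hHiso y hy, hHiso _ (add_mem hx hy)] at h1
    simpa using h1.symm
  have hbH' : ∀ x ∈ H', ∀ y ∈ H', b x y = 0 := by
    intro x hx y hy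
    apply doubleHom_eq_zero
    have h1 := hqb x y
    rw [hH'iso x hx, hH'iso y hy, hH'iso _ (add_mem hx hy)] at h1
    simpa using h1.symm
  -- decomposition of arbitrary elements
  have hdec : ∀ a : A, ∃ h ∈ H, ∃ h' ∈ H', ∃ t ∈ torsionSub A D, a = h + h' + t := by
    intro a
    have ha : a ∈ H ⊔ H' ⊔ torsionSub A D := by rw [claim1]; trivial
    obtain ⟨w, hw, t, ht, rfl⟩ := AddSubgroup.mem_sup.mp ha
    obtain ⟨h, hh, h', hh', rfl⟩ := AddSubgroup.mem_sup.mp hw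
    exact ⟨h, hh, h', hh', t, ht, rfl⟩
  have hoc : ∀ z : A, z ∈ orthCompl b H ↔ ∀ h ∈ H, b z h = 0 := fun z => Iff.rfl
  -- claim 3
  refine ⟨claim1, claim2, le_antisymm ?_ ?_⟩
  · intro x hx
    rw [hoc] at hx
    obtain ⟨h, hh, h', hh', t, ht, rfl⟩ := hdec x
    have hh'0 : h' = 0 := by
      apply hbnd
      intro y
      obtain ⟨k, hk, k', hk', s, hs, rfl⟩ := hdec y
      have h1 : b h' k = 0 := by
        have h2 := hx k hk
        rw [pairing_add_left, pairing_add_left, hbH h hh k hk,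
          orth_coprime b hcop.symm (mem_torsionSub.mp ht) (hHk k hk)] at h2
        simpa using h2
      have h2 : b h' k' = 0 := hbH' h' hh' k' hk'
      have h3 : b h' s = 0 := orth_coprime b hcop (hH'k h' hh') (mem_torsionSub.mp hs)
      rw [map_add, map_add, h1, h2, h3, add_zero, add_zero]
    rw [hh'0, add_zero]
    exact AddSubgroup.add_mem_sup hh ht
  · intro x hx
    rw [hoc]
    intro k hk
    obtain ⟨h0, hh0, t0, ht0, rfl⟩ := AddSubgroup.mem_sup.mp hx
    rw [pairing_add_left, hbH h0 hh0 k hk,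
      orth_coprime b hcop.symm (mem_torsionSub.mp ht0) (hHk k hk), add_zero]
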